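/- Let L be a nonnegative self-adjoint operator on L²(ν) over a finite set with eigenpairs (λ_j, u_j). For Λ > 0 let Σ_Λ = span{u_j : λ_j ≤ Λ}. Then every f ∈ Σ_Λ satisfies ‖f‖_∞² ≤ e · (max_{x∈V} p_{1/Λ}(x,x)) · ‖f‖_{L²(ν)}². -/
import Mathlib


/-- `L^∞–L²` comparison on low-frequency spectral subspaces: if `f ∈ span{u_j : λ_j ≤ Λ}`
then `‖f‖_∞² ≤ e · (max_x p_{1/Λ}(x,x)) · ‖f‖_{L²(ν)}²`. -/
theorem stmt_10 {V : Type*} [Fintype V] [Nonempty V]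
    (ν : V → ℝ) (hν : ∀ x, 0 < ν x) (hν1 : ∑ x, ν x = 1)
    (N : ℕ) (lam : Fin N → ℝ) (hlam : ∀ j, 0 ≤ lam j)
    (u : Fin N → V → ℝ)
    (horth : ∀ i j, ∑ x, u i x * u j x * ν x = if i = j then (1:ℝ) else 0)
    (Λ : ℝ) (hΛ : 0 < Λ)
    (p : V → V → ℝ)
    (hp : ∀ x y, p x y = ∑ j, Real.exp (-(Λ⁻¹ * lam j)) * u j x * u j y)
    (c : Fin N → ℝ) (f : V → ℝ)
    (hf : f = fun x => ∑ j ∈ Finset.univ.filter (fun j : Fin N => lam j ≤ Λ), c j * u j x) :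
    ∀ x, (f x)^2 ≤ Real.exp 1 * (⨆ z, p z z) * ∑ y, (f y)^2 * ν y := by
  intro x
  set S : Finset (Fin N) := Finset.univ.filter (fun j : Fin N => lam j ≤ Λ) with hS
  -- L² norm equals sum of squared coefficients
  have hnorm : ∑ y, (f y)^2 * ν y = ∑ j ∈ S, (c j)^2 := by
    subst hf
    simp only
    have : ∀ y : V, (∑ j ∈ S, c j * u j y)^2 * ν y
        = ∑ i ∈ S, ∑ j ∈ S, (c i * c j) * (u i y * u j y * ν y) := by
      intro y
      rw [sq, Finset.sum_mul_sum, Finset.sum_mul]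
      congr 1; ext i
      rw [Finset.sum_mul]
      congr 1; ext j
      ring
    simp_rw [this]
    rw [Finset.sum_comm]
    have horthS : ∀ i j : Fin N, ∑ y, u i y * u j y * ν y = if i = j then (1:ℝ) else 0 :=
      horth
    calc ∑ i ∈ S, ∑ y, ∑ j ∈ S, (c i * c j) * (u i y * u j y * ν y)
        = ∑ i ∈ S, ∑ j ∈ S, (c i * c j) * ∑ y, (u i y * u j y * ν y) := by
          congr 1; ext i
          rw [Finset.sum_comm]
          congr 1; ext j
          rw [Finset.mul_sum]
      _ = ∑ i ∈ S, ∑ j ∈ S, (c i * c j) * (if i = j then (1:ℝ) else 0) := by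
          simp_rw [horthS]
      _ = ∑ j ∈ S, (c j)^2 := by
          apply Finset.sum_congr rfl
          intro i hi
          rw [Finset.sum_eq_single i]
          · simp [sq]
          · intro j hj hji; simp [Ne.symm hji]
          · intro h; exact absurd hi h
  -- Cauchy–Schwarz
  have hcs : (f x)^2 ≤ (∑ j ∈ S, (c j)^2) * (∑ j ∈ S, (u j x)^2) := by
    subst hf
    simpa using Finset.sum_mul_sq_le_sq_mul_sq S c (fun j => u j x)
  -- kernel bound
  have hker : ∑ j ∈ S, (u j x)^2 ≤ Real.exp 1 * p x x := by
    rw [hp, Finset.mul_sum]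
    have h1 : ∑ j ∈ S, (u j x)^2
        ≤ ∑ j : Fin N, Real.exp 1 * (Real.exp (-(Λ⁻¹ * lam j)) * u j x * u j x) := by
      apply le_trans (Finset.sum_le_sum (g := fun j =>
        Real.exp 1 * (Real.exp (-(Λ⁻¹ * lam j)) * u j x * u j x)) ?_)
      · apply Finset.sum_le_sum_of_subset_of_nonneg (Finset.subset_univ S)
        intro j _ _
        have : (0:ℝ) ≤ Real.exp 1 * Real.exp (-(Λ⁻¹ * lam j)) * (u j x)^2 :=
          mul_nonneg (mul_nonneg (Real.exp_pos _).le (Real.exp_pos _).le) (sq_nonneg _)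
        calc (0:ℝ) ≤ Real.exp 1 * Real.exp (-(Λ⁻¹ * lam j)) * (u j x)^2 := this
          _ = Real.exp 1 * (Real.exp (-(Λ⁻¹ * lam j)) * u j x * u j x) := by ring
      · intro j hj
        have hjΛ : lam j ≤ Λ := by
          simpa [hS] using hj
        have h1' : (1:ℝ) ≤ Real.exp 1 * Real.exp (-(Λ⁻¹ * lam j)) := by
          rw [← Real.exp_add]
          have : (0:ℝ) ≤ 1 + -(Λ⁻¹ * lam j) := by
            have : Λ⁻¹ * lam j ≤ 1 := by
              rw [← inv_mul_cancel₀ hΛ.ne']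
              exact mul_le_mul_of_nonneg_left hjΛ (inv_nonneg.2 hΛ.le)
            linarith
          calc (1:ℝ) = Real.exp 0 := Real.exp_zero.symm
            _ ≤ Real.exp (1 + -(Λ⁻¹ * lam j)) := Real.exp_le_exp.2 (by linarith)
        calc (u j x)^2 = 1 * (u j x)^2 := (one_mul _).symm
          _ ≤ (Real.exp 1 * Real.exp (-(Λ⁻¹ * lam j))) * (u j x)^2 :=
              mul_le_mul_of_nonneg_right h1' (sq_nonneg _)
          _ = Real.exp 1 * (Real.exp (-(Λ⁻¹ * lam j)) * u j x * u j x) := by ring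
    exact h1
  have hsup : p x x ≤ ⨆ z, p z z := le_ciSup (Set.Finite.bddAbove (Set.finite_range (fun z => p z z))) x
  have hA : (0:ℝ) ≤ ∑ j ∈ S, (c j)^2 := Finset.sum_nonneg fun j _ => sq_nonneg _
  have hB : ∑ j ∈ S, (u j x)^2 ≤ Real.exp 1 * (⨆ z, p z z) :=
    hker.trans (mul_le_mul_of_nonneg_left hsup (Real.exp_pos _).le)
  calc (f x)^2 ≤ (∑ j ∈ S, (c j)^2) * (∑ j ∈ S, (u j x)^2) := hcs
    _ ≤ (∑ j ∈ S, (c j)^2) * (Real.exp 1 * (⨆ z, p z z)) :=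
        mul_le_mul_of_nonneg_left hB hA
    _ = Real.exp 1 * (⨆ z, p z z) * ∑ j ∈ S, (c j)^2 := by ring
    _ = Real.exp 1 * (⨆ z, p z z) * ∑ y, (f y)^2 * ν y := by rw [hnorm]
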